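/- arXiv:2512.24920 — 5 statements merged into one kernel-verified Lean document; each statement's English description precedes it below -/
import Mathlib

section
/- Let R be a ring, a, b, w ∈ R with w central, and define 𝔸(x, y) = (a·x + w·y, b·x − a·y) on R × R. Set F = a² + w·b and C = b·a − a·b. Then for every k ≥ 1, the iterate 𝔸^{2k} satisfies 𝔸^{2k}(x, y) = (F^k·x, F^k·y + (∑_{i=0}^{k-1} F^i·C·F^{k-1-i})·x) for all x, y ∈ R. -/
/-- The primitive superconnection map `𝔸(x, y) = (a·x + w·y, b·x − a·y)`. -/
def primA {R : Type*} [Ring R] (a b w : R) : R × R → R × R :=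
  fun p => (a * p.1 + w * p.2, b * p.1 - a * p.2)

lemma primA_sq {R : Type*} [Ring R] (a b w : R) (hw : ∀ r : R, w * r = r * w)
    (x y : R) :
    (primA a b w)^[2] (x, y) =
      ((a ^ 2 + w * b) * x, (a ^ 2 + w * b) * y + (b * a - a * b) * x) := by
  have hc : ∀ r s : R, r * (w * s) = w * (r * s) := fun r s => by
    rw [← mul_assoc, ← hw, mul_assoc]
  simp only [Function.iterate_succ, Function.iterate_zero, Function.comp_apply, id_eq, primA]
  rw [Prod.mk.injEq]
  constructor
  · simp only [mul_add, mul_sub]; rw [hc a y]; noncomm_ring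
  · simp only [mul_add, mul_sub]; rw [hc b y]; noncomm_ring

theorem primA_pow_two_mul {R : Type*} [Ring R] (a b w : R)
    (hw : ∀ r : R, w * r = r * w) :
    ∀ k : ℕ, 1 ≤ k → ∀ x y : R,
      (primA a b w)^[2 * k] (x, y) =
        ((a ^ 2 + w * b) ^ k * x,
         (a ^ 2 + w * b) ^ k * y +
           (∑ i ∈ Finset.range k,
             (a ^ 2 + w * b) ^ i * (b * a - a * b) * (a ^ 2 + w * b) ^ (k - 1 - i)) * x) := by
  set F := a ^ 2 + w * b with hF
  set C := b * a - a * b with hC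
  intro k
  induction k with
  | zero => omega
  | succ n ih =>
    intro _ x y
    rcases Nat.eq_zero_or_pos n with hn | hn
    · subst hn
      rw [show 2 * 1 = 2 from rfl, primA_sq a b w hw]
      simp [hF, hC]
    · have h2 : 2 * (n + 1) = 2 * n + 2 := by ring
      rw [h2, Function.iterate_add_apply, primA_sq a b w hw, ih hn]
      rw [Prod.mk.injEq]
      constructor
      · rw [← mul_assoc, ← pow_succ]
      · rw [Finset.sum_range_succ]
        have hsum : ∀ i ∈ Finset.range n,
            F ^ i * C * F ^ (n + 1 - 1 - i) = F ^ i * C * F ^ (n - 1 - i) * F := by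
          intro i hi
          rw [Finset.mem_range] at hi
          rw [show n + 1 - 1 - i = n - 1 - i + 1 by omega, pow_succ, ← mul_assoc]
        rw [Finset.sum_congr rfl hsum]
        simp only [Nat.add_sub_cancel, Nat.sub_self, pow_zero, mul_one]
        rw [← hF, ← hC, ← Finset.sum_mul]
        simp only [pow_succ, add_mul, mul_add, mul_assoc]
        abel
end

section
/- Let R be a ring, a, b, w ∈ R with w central. Set F = a² + w·b and C = b·a − a·b. Then for every k ≥ 1: a·F^k − F^k·a + w·(∑_{i=0}^{k-1} F^i·C·F^{k-1-i}) = 0. -/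
private lemma pb_aux {R : Type*} [Ring R] (a b w : R)
    (hw : ∀ r : R, w * r = r * w) :
    ∀ k : ℕ,
      a * (a ^ 2 + w * b) ^ k - (a ^ 2 + w * b) ^ k * a +
        w * (∑ i ∈ Finset.range k,
          (a ^ 2 + w * b) ^ i * (b * a - a * b) * (a ^ 2 + w * b) ^ (k - 1 - i)) = 0 := by
  set F := a ^ 2 + w * b with hF
  set C := b * a - a * b with hC
  have base : a * F = F * a - w * C := by
    rw [hF, hC]
    have h1 : a * (w * b) = w * (a * b) := by
      rw [← mul_assoc, ← hw a, mul_assoc]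
    rw [mul_add, add_mul, mul_sub, h1]
    rw [pow_two]
    noncomm_ring
  intro k
  induction k with
  | zero => simp
  | succ n ih =>
    have h1 : a * F ^ n = F ^ n * a - w * ∑ i ∈ Finset.range n,
        F ^ i * C * F ^ (n - 1 - i) := by
      have h := ih
      rw [sub_add_eq_add_sub, sub_eq_zero] at h
      rw [eq_sub_iff_add_eq]
      exact h
    rw [Finset.sum_range_succ]
    have hsum : ∀ i ∈ Finset.range n,
        F ^ i * C * F ^ (n + 1 - 1 - i) = (F ^ i * C * F ^ (n - 1 - i)) * F := by
      intro i hi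
      rw [Finset.mem_range] at hi
      have : n + 1 - 1 - i = (n - 1 - i) + 1 := by omega
      rw [this, pow_succ]
      noncomm_ring
    rw [Finset.sum_congr rfl hsum, ← Finset.sum_mul]
    have : n + 1 - 1 - n = 0 := by omega
    rw [this, pow_zero, mul_one, pow_succ]
    rw [← mul_assoc, h1, sub_mul]
    have e : F ^ n * a * F = F ^ n * (F * a) - F ^ n * (w * C) := by
      rw [mul_assoc, base, mul_sub]
    have hwF : F ^ n * (w * C) = w * (F ^ n * C) := by
      rw [← mul_assoc, ← hw (F ^ n), mul_assoc]
    rw [e, hwF]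
    noncomm_ring

theorem primitive_bianchi_first {R : Type*} [Ring R] (a b w : R)
    (hw : ∀ r : R, w * r = r * w) :
    ∀ k : ℕ, 1 ≤ k →
      a * (a ^ 2 + w * b) ^ k - (a ^ 2 + w * b) ^ k * a +
        w * (∑ i ∈ Finset.range k,
          (a ^ 2 + w * b) ^ i * (b * a - a * b) * (a ^ 2 + w * b) ^ (k - 1 - i)) = 0 := by
  intro k _
  exact pb_aux a b w hw k
end

section
/- Let R be a ring, a, b, w ∈ R with w central. Set F = a² + w·b and C = b·a − a·b, and let S_k = ∑_{i=0}^{k-1} F^i·C·F^{k-1-i}. Then for every k ≥ 1: b·F^k − F^k·b − a·S_k − S_k·a = 0. -/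
set_option maxHeartbeats 1000000

private lemma pb_aux1 {R : Type*} [Ring R] (a w F C P Sk : R) :
    a * (P * F) - P * F * a + w * (Sk * F + P * C)
      = (a * P - P * a + w * Sk) * F + P * (a * F - F * a + w * C)
        + (w * (P * C) - P * (w * C)) := by noncomm_ring

private lemma pb_aux2 {R : Type*} [Ring R] (a b w F C P Sk : R) :
    b * (P * F) - P * F * b - a * (Sk * F + P * C) - (Sk * F + P * C) * a
      = (b * P - P * b - a * Sk - Sk * a) * F + P * (b * F - F * b - a * C - C * a)
        + Sk * (a * F - F * a + w * C) - (a * P - P * a + w * Sk) * C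
        - (Sk * (w * C) - w * (Sk * C)) := by noncomm_ring

theorem primitive_bianchi_second {R : Type*} [Ring R] (a b w : R)
    (hw : ∀ r : R, w * r = r * w) :
    ∀ k : ℕ, 1 ≤ k →
      b * (a ^ 2 + w * b) ^ k - (a ^ 2 + w * b) ^ k * b -
        a * (∑ i ∈ Finset.range k,
          (a ^ 2 + w * b) ^ i * (b * a - a * b) * (a ^ 2 + w * b) ^ (k - 1 - i)) -
        (∑ i ∈ Finset.range k,
          (a ^ 2 + w * b) ^ i * (b * a - a * b) * (a ^ 2 + w * b) ^ (k - 1 - i)) * a = 0 := by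
  set F := a ^ 2 + w * b with hF
  set C := b * a - a * b with hC
  set S : ℕ → R := fun k => ∑ i ∈ Finset.range k, F ^ i * C * F ^ (k - 1 - i) with hSdef
  have hS : ∀ k : ℕ, S (k + 1) = S k * F + F ^ k * C := by
    intro k
    simp only [hSdef]
    rw [Finset.sum_range_succ, Nat.add_sub_cancel, Nat.sub_self, pow_zero, mul_one,
      Finset.sum_mul]
    congr 1
    apply Finset.sum_congr rfl
    intro i hi
    have hi' : i < k := Finset.mem_range.mp hi
    have : k - i = (k - 1 - i) + 1 := by omega
    rw [this, pow_succ]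
    simp [mul_assoc]
  clear_value S
  have hbase1 : a * F - F * a + w * C = 0 := by
    have e : a * (w * b) = w * (a * b) := by rw [← mul_assoc, ← hw a, mul_assoc]
    rw [hF, hC, mul_add, add_mul, e, mul_sub]
    noncomm_ring
  have hbase2 : b * F - F * b - a * C - C * a = 0 := by
    have e : b * (w * b) = w * b * b := by rw [← mul_assoc, ← hw b]
    rw [hF, hC, mul_add, add_mul, e]
    noncomm_ring
  clear_value F C
  have h1 : ∀ k : ℕ, a * F ^ k - F ^ k * a + w * S k = 0 := by
    intro k
    induction k with
    | zero =>
      have : S 0 = 0 := by simp [hSdef]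
      simp [this]
    | succ k ih =>
      rw [hS, pow_succ, pb_aux1 a w F C (F ^ k) (S k), ih, hbase1,
        ← mul_assoc, hw (F ^ k), mul_assoc]
      simp
  have h2 : ∀ k : ℕ, b * F ^ k - F ^ k * b - a * S k - S k * a = 0 := by
    intro k
    induction k with
    | zero =>
      have : S 0 = 0 := by simp [hSdef]
      simp [this]
    | succ k ih =>
      rw [hS, pow_succ, pb_aux2 a b w F C (F ^ k) (S k), ih, hbase1, hbase2, h1 k]
      simp only [mul_zero, zero_mul, add_zero, zero_add, zero_sub, sub_zero, neg_eq_zero,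
        sub_eq_zero]
      rw [← mul_assoc, ← hw (S k), mul_assoc]
  intro k _
  simpa [hSdef] using h2 k
end

section
/- Let M be a smooth manifold with closed 2-form ω, and define ∂(α, β) = (dα + ω ∧ β, −dβ) on Ω(M) ⊕ Ω(M). Equip Ω(M) ⊕ Ω(M) with the product (α₁, β₁)·(α₂, β₂) = (α₁ ∧ α₂, β₁ ∧ α₂ + (−1)^{|α₁|} α₁ ∧ β₂). Then ∂ is a graded derivation: for homogeneous (α₁, β₁) of total degree p (i.e., α₁ ∈ Ω^p(M), β₁ ∈ Ω^{p−1}(M)), ∂((α₁,β₁)·(α₂,β₂)) = ∂(α₁,β₁)·(α₂,β₂) + (−1)^p (α₁,β₁)·∂(α₂,β₂). -/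
/-- The product on the cone complex `Ω(M) ⊕ Ω(M)`, with `ε` the parity involution
acting by `(−1)^{|α|}` on homogeneous `α`. -/
def coneMul {A : Type*} [Ring A] (ε : A →+* A) : A × A → A × A → A × A :=
  fun p q => (p.1 * q.1, p.2 * q.1 + ε p.1 * q.2)

/-- The primitive boundary map `∂(α, β) = (dα + ω ∧ β, −dβ)`. -/
def coneD {A : Type*} [Ring A] (d : A →+ A) (w : A) : A × A → A × A :=
  fun q => (d q.1 + w * q.2, -(d q.2))

theorem coneD_derivation {A : Type*} [Ring A] (ε : A →+* A) (d : A →+ A) (w : A)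
    (hLeib : ∀ x y : A, d (x * y) = d x * y + ε x * d y)
    (hεd : ∀ x : A, ε (d x) = -(d (ε x)))
    (hw : ∀ x : A, w * x = x * w)
    (hεw : ε w = w)
    (hdw : d w = 0)
    (p : ℕ) (α₁ β₁ : A)
    (hα : ε α₁ = ((-1 : ℤ) ^ p) • α₁)
    (hβ : ε β₁ = -(((-1 : ℤ) ^ p) • β₁)) :
    ∀ α₂ β₂ : A,
      coneD d w (coneMul ε (α₁, β₁) (α₂, β₂)) =
        coneMul ε (coneD d w (α₁, β₁)) (α₂, β₂) +
          ((-1 : ℤ) ^ p) • coneMul ε (α₁, β₁) (coneD d w (α₂, β₂)) := by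
  intro α₂ β₂
  have hcc : ∀ x : A, ((-1 : ℤ) ^ p) • ((-1 : ℤ) ^ p) • x = x := by
    intro x; rw [smul_smul, ← mul_pow]; norm_num
  simp only [coneD, coneMul, Prod.mk.injEq, Prod.smul_mk, Prod.mk_add_mk, hLeib, map_add,
    map_mul, map_neg, map_zsmul, hα, hβ, hεd, hεw, hcc, smul_add, smul_neg, smul_smul,
    mul_add, add_mul, mul_assoc, neg_mul, mul_neg, neg_add, neg_neg, smul_mul_assoc,
    mul_smul_comm, hw]
  constructor <;> abel
end

section
/- Let M be a smooth manifold with closed 2-form ω, and let ∂(α, β) = (dα + ω ∧ β, −dβ) on Ω(M) ⊕ Ω(M). If (α₁, β₁) and (α₂, β₂) are both ∂-closed, then their product (α₁ ∧ α₂, β₁ ∧ α₂ + (−1)^{|α₁|} α₁ ∧ β₂) is ∂-closed; and if additionally (α₂, β₂) = ∂(γ, δ) is exact, then the product is ∂-exact. -/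
theorem coneAux {A : Type*} [Ring A] (ε : A →+* A) (d : A →+ A) (w c : A)
    (hLeib : ∀ x y : A, d (x * y) = d x * y + ε x * d y)
    (hεd : ∀ x : A, ε (d x) = -(d (ε x)))
    (hw : ∀ x : A, w * x = x * w)
    (hεw : ε w = w)
    (hc : ∀ x : A, c * x = x * c)
    (hcc : c * c = 1)
    (hεc : ε c = c)
    (hdc : d c = 0)
    (α₁ β₁ α₂ β₂ : A)
    (hα : ε α₁ = c * α₁) (hβ : ε β₁ = -(c * β₁))
    (h1 : d α₁ = -(w * β₁)) (h2 : d β₁ = 0)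
    (h3 : d α₂ = -(w * β₂)) (h4 : d β₂ = 0) :
    coneD d w (coneMul ε (α₁, β₁) (α₂, β₂)) = 0 ∧
    (∀ γ δ : A, (α₂, β₂) = coneD d w (γ, δ) →
      ∃ γ' δ' : A, coneMul ε (α₁, β₁) (α₂, β₂) = coneD d w (γ', δ')) := by
  have hwm : ∀ x y : A, w * (x * y) = x * (w * y) := fun x y => by
    rw [← mul_assoc, hw x, mul_assoc]
  have hccm : ∀ x y : A, c * (c * x * y) = x * y := fun x y => by
    rw [mul_assoc c x y, ← mul_assoc c c, hcc, one_mul]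
  have h5 : d (ε α₁) = w * ε β₁ := by
    have h := hεd α₁
    rw [h1, map_neg, map_mul, hεw] at h
    exact (neg_injective h).symm
  have hεεα : ε (ε α₁) = α₁ := by
    rw [hα, map_mul, hεc, hα, ← mul_assoc, hcc, one_mul]
  constructor
  · simp only [coneD, coneMul, Prod.mk_eq_zero]
    constructor
    · rw [hLeib, h1, h3, hα, mul_add, hwm (c * α₁) β₂]
      noncomm_ring
    · rw [map_add, hLeib, hLeib, h2, h4, h3, h5, hβ, hεεα]
      have e1 : (-(c * β₁)) * -(w * β₂) = c * (β₁ * w) * β₂ := by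
        rw [neg_mul_neg]; noncomm_ring
      have e2 : (w * -(c * β₁)) * β₂ = -(c * (β₁ * w) * β₂) := by
        rw [mul_neg, hwm c β₁, hw β₁]; noncomm_ring
      rw [e1, e2]
      noncomm_ring
  · intro γ δ hγδ
    simp only [coneD, Prod.mk.injEq] at hγδ
    obtain ⟨ha, hb⟩ := hγδ
    refine ⟨c * (α₁ * γ), c * (β₁ * γ + ε α₁ * δ), ?_⟩
    simp only [coneD, coneMul, Prod.mk.injEq]
    have keyE1 : d (α₁ * γ) + w * (β₁ * γ + ε α₁ * δ) = ε α₁ * (d γ + w * δ) := by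
      rw [hLeib, h1, mul_add w, hwm (ε α₁) δ]
      noncomm_ring
    have keyE2 : d (β₁ * γ + ε α₁ * δ) = ε β₁ * (d γ + w * δ) + α₁ * d δ := by
      rw [map_add, hLeib, hLeib, h2, h5, hεεα, hw (ε β₁)]
      noncomm_ring
    constructor
    · rw [ha, hLeib c, hdc, hεc, zero_mul, zero_add, hwm c, ← mul_add, keyE1, hα,
        mul_assoc c α₁, ← mul_assoc c c, hcc, one_mul]
    · rw [ha, hb, hLeib c, hdc, hεc, zero_mul, zero_add, keyE2, hβ, hα, mul_add c,
        neg_mul, mul_neg c, hccm]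
      noncomm_ring

theorem coneD_closed_mul_closed {A : Type*} [Ring A] (ε : A →+* A) (d : A →+ A) (w : A)
    (hd2 : ∀ x : A, d (d x) = 0)
    (hLeib : ∀ x y : A, d (x * y) = d x * y + ε x * d y)
    (hεd : ∀ x : A, ε (d x) = -(d (ε x)))
    (hw : ∀ x : A, w * x = x * w)
    (hεw : ε w = w)
    (hdw : d w = 0)
    (p : ℕ) (α₁ β₁ : A)
    (hα : ε α₁ = ((-1 : ℤ) ^ p) • α₁)
    (hβ : ε β₁ = -(((-1 : ℤ) ^ p) • β₁))
    (α₂ β₂ : A)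
    (hclosed₁ : coneD d w (α₁, β₁) = 0)
    (hclosed₂ : coneD d w (α₂, β₂) = 0) :
    coneD d w (coneMul ε (α₁, β₁) (α₂, β₂)) = 0 ∧
    (∀ γ δ : A, (α₂, β₂) = coneD d w (γ, δ) →
      ∃ γ' δ' : A, coneMul ε (α₁, β₁) (α₂, β₂) = coneD d w (γ', δ')) := by
  have hd1 : d (1 : A) = 0 := by
    have h := hLeib 1 1
    simp only [mul_one, map_one, one_mul] at h
    exact left_eq_add.mp h
  simp only [coneD, Prod.mk_eq_zero, neg_eq_zero] at hclosed₁ hclosed₂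
  have h1 : d α₁ = -(w * β₁) := eq_neg_of_add_eq_zero_left hclosed₁.1
  have h3 : d α₂ = -(w * β₂) := eq_neg_of_add_eq_zero_left hclosed₂.1
  rcases Nat.even_or_odd p with hp | hp
  · rw [hp.neg_one_pow, one_smul] at hα hβ
    exact coneAux ε d w 1 hLeib hεd hw hεw (fun x => by rw [one_mul, mul_one])
      (one_mul 1) (map_one ε) hd1 α₁ β₁ α₂ β₂ (by rw [hα, one_mul])
      (by rw [hβ, one_mul]) h1 hclosed₁.2 h3 hclosed₂.2
  · rw [hp.neg_one_pow, neg_one_zsmul] at hα hβ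
    exact coneAux ε d w (-1) hLeib hεd hw hεw (fun x => by rw [neg_one_mul, mul_neg_one])
      (by rw [neg_one_mul, neg_neg]) (by rw [map_neg, map_one])
      (by rw [map_neg, hd1, neg_zero]) α₁ β₁ α₂ β₂ (by rw [hα, neg_one_mul])
      (by rw [hβ, neg_one_mul]) h1 hclosed₁.2 h3 hclosed₂.2
end
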